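/- arXiv:2508.14147 — 2 statements merged into one kernel-verified Lean document; each statement's English description precedes it below -/
import Mathlib

section
/- Let G be a temporal graph, k ≥ 1 an integer, ts a start time, and e a temporal edge such that the core time te = CT_ts(e) exists. If either CT_{ts+1}(e) does not exist or CT_{ts+1}(e) ≠ CT_ts(e), then [ts, te] is a minimal core window of e. -/
variable {V : Type*} [Fintype V]

/-- A vertex set `S` is `k`-dense in `G` if every vertex of `S` has
at least `k` neighbors of `G` lying in `S`. -/
def KDense (G : SimpleGraph V) (k : ℕ) (S : Set V) : Prop :=
  ∀ v ∈ S, k ≤ (S ∩ G.neighborSet v).ncard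

/-- The `k`-core of `G`: the union of all `k`-dense vertex sets. -/
def kCore (G : SimpleGraph V) (k : ℕ) : Set V :=
  ⋃₀ {S | KDense G k S}

/-- A temporal graph on a vertex set `V`: a finite set of temporal edges
`(u, v, t)` with `u ≠ v` and integer timestamp `t`. -/
structure TemporalGraph (V : Type*) where
  E : Finset (V × V × ℤ)
  ne : ∀ e ∈ E, e.1 ≠ e.2.1

/-- The projected (snapshot) graph of `G` over the time window `[ts, te]`. -/
def TemporalGraph.proj (G : TemporalGraph V) (ts te : ℤ) : SimpleGraph V where
  Adj u v := ∃ t, ts ≤ t ∧ t ≤ te ∧ ((u, v, t) ∈ G.E ∨ (v, u, t) ∈ G.E)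
  symm := by
    constructor
    rintro u v ⟨t, h1, h2, h3⟩
    exact ⟨t, h1, h2, h3.symm⟩
  loopless := by
    constructor
    rintro u ⟨t, h1, h2, h3⟩
    rcases h3 with h | h <;> exact G.ne _ h rfl

/-- The temporal `k`-core of the window `[ts, te]`: all temporal edges with
timestamp in `[ts, te]` whose both endpoints lie in the `k`-core of the
projected graph `G_[ts,te]`. -/
def TemporalGraph.tCore (G : TemporalGraph V) (k : ℕ) (ts te : ℤ) :
    Set (V × V × ℤ) :=
  {e | e ∈ G.E ∧ ts ≤ e.2.2 ∧ e.2.2 ≤ te ∧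
    e.1 ∈ kCore (G.proj ts te) k ∧ e.2.1 ∈ kCore (G.proj ts te) k}

/-- `[t1, t2]` is a minimal core window of the temporal edge `e`:
`e` lies in the temporal `k`-core of `[t1, t2]` but in no temporal `k`-core
of a window properly contained in `[t1, t2]`. -/
def MinCoreWindow (G : TemporalGraph V) (k : ℕ) (e : V × V × ℤ)
    (t1 t2 : ℤ) : Prop :=
  e ∈ G.tCore k t1 t2 ∧
  ∀ ts' te', t1 ≤ ts' → te' ≤ t2 → (ts', te') ≠ (t1, t2) →
    e ∉ G.tCore k ts' te'


lemma kCore_mono {G G' : SimpleGraph V} (hGG : G ≤ G') (k : ℕ) :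
    kCore G k ⊆ kCore G' k := by
  rintro v ⟨S, hS, hvS⟩
  refine ⟨S, fun w hw => le_trans (hS w hw) ?_, hvS⟩
  exact Set.ncard_le_ncard (Set.inter_subset_inter_right _
    (fun x hx => hGG hx)) (Set.toFinite _)

lemma proj_mono (G : TemporalGraph V) {ts te ts' te' : ℤ}
    (h1 : ts ≤ ts') (h2 : te' ≤ te) :
    G.proj ts' te' ≤ G.proj ts te := by
  rintro u v ⟨t, ht1, ht2, ht3⟩
  exact ⟨t, le_trans h1 ht1, le_trans ht2 h2, ht3⟩

lemma tCore_mono (G : TemporalGraph V) (k : ℕ) {ts te ts' te' : ℤ}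
    (h1 : ts ≤ ts') (h2 : te' ≤ te) {e : V × V × ℤ}
    (he : e ∈ G.tCore k ts' te') : e ∈ G.tCore k ts te := by
  obtain ⟨hE, ha, hb, hc, hd⟩ := he
  exact ⟨hE, le_trans h1 ha, le_trans hb h2,
    kCore_mono (proj_mono G h1 h2) k hc,
    kCore_mono (proj_mono G h1 h2) k hd⟩

theorem minCoreWindow_of_core_time_change (G : TemporalGraph V) (k : ℕ)
    (hk : 1 ≤ k) (e : V × V × ℤ) (ts te : ℤ)
    (h : IsLeast {x : ℤ | e ∈ G.tCore k ts x} te)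
    (hne : ∀ te', IsLeast {x : ℤ | e ∈ G.tCore k (ts + 1) x} te' → te' ≠ te) :
    MinCoreWindow G k e ts te := by
  refine ⟨h.1, ?_⟩
  rintro ts' te' hts hte hpair hmem
  rcases lt_or_eq_of_le hte with hlt | heq
  · have : e ∈ G.tCore k ts te' := tCore_mono G k hts le_rfl hmem
    exact absurd (h.2 this) (not_le.mpr hlt)
  · subst heq
    have hts' : ts + 1 ≤ ts' := by
      rcases lt_or_eq_of_le hts with h' | h'
      · omega
      · exact absurd (by rw [h']) hpair
    have hmem' : e ∈ G.tCore k (ts + 1) te' := tCore_mono G k hts' le_rfl hmem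
    refine hne te' ⟨hmem', ?_⟩ rfl
    intro x hx
    exact h.2 (tCore_mono G k (by omega) le_rfl hx)
end

section
/- Let G be a temporal graph and k ≥ 1 an integer. Let [t1,t2] be a minimal core window of some temporal edge such that no temporal edge of G has a minimal core window [t1,t2'] with t2' < t2 (i.e., starting at t1 and ending strictly earlier than t2). Then there exists a temporal edge e with timestamp exactly t1 such that [t1,t2] is a minimal core window of e. -/
variable {V : Type*} [Fintype V]

open Classical in
lemma kCore_kDense (G : SimpleGraph V) (k : ℕ) : KDense G k (kCore G k) := by
  intro v hv
  obtain ⟨S, hS, hvS⟩ := hv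
  calc k ≤ (S ∩ G.neighborSet v).ncard := hS v hvS
    _ ≤ (kCore G k ∩ G.neighborSet v).ncard := by
        apply Set.ncard_le_ncard
        · exact Set.inter_subset_inter_left _ (Set.subset_sUnion_of_mem hS)
        · exact Set.toFinite _

lemma mem_kCore_of_kDense {G : SimpleGraph V} {k : ℕ} {S : Set V}
    (hS : KDense G k S) {v : V} (hv : v ∈ S) : v ∈ kCore G k :=
  Set.subset_sUnion_of_mem hS hv

theorem exists_edge_at_start_of_min_window (G : TemporalGraph V) (k : ℕ)
    (hk : 1 ≤ k) (t1 t2 : ℤ)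
    (h : ∃ e : V × V × ℤ, MinCoreWindow G k e t1 t2)
    (hmin : ∀ (e : V × V × ℤ) (t2' : ℤ),
      MinCoreWindow G k e t1 t2' → ¬ t2' < t2) :
    ∃ e : V × V × ℤ, e.2.2 = t1 ∧ MinCoreWindow G k e t1 t2 := by
  classical
  obtain ⟨e, he⟩ := h
  -- Step 1: find an edge at time t1 in the temporal core of [t1, t2]
  have step1 : ∃ f : V × V × ℤ, f.2.2 = t1 ∧ f ∈ G.tCore k t1 t2 := by
    by_contra hno
    push_neg at hno
    -- no adjacency within the core is witnessed at time t1 with both ends in core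
    set S := kCore (G.proj t1 t2) k with hSdef
    have hNoEdge : ∀ f : V × V × ℤ, f ∈ G.E → f.2.2 = t1 →
        ¬ (f.1 ∈ S ∧ f.2.1 ∈ S) := by
      rintro f hfE hft ⟨h1, h2⟩
      exact hno f hft ⟨hfE, le_of_eq hft.symm, hft ▸ (he.1.2.1.trans he.1.2.2.1), h1, h2⟩
    -- S is k-dense in the projection over [t1+1, t2]
    have hdense : KDense (G.proj (t1 + 1) t2) k S := by
      intro v hv
      have h0 : k ≤ (S ∩ (G.proj t1 t2).neighborSet v).ncard :=
        kCore_kDense (G.proj t1 t2) k v hv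
      refine h0.trans (Set.ncard_le_ncard ?_ (Set.toFinite _))
      rintro w ⟨hwS, t, ht1, ht2, hw⟩
      refine ⟨hwS, t, ?_, ht2, hw⟩
      rcases lt_or_eq_of_le ht1 with h' | h'
      · exact h'
      · exfalso
        rcases hw with hw | hw
        · exact hNoEdge (v, w, t) hw h'.symm ⟨hv, hwS⟩
        · exact hNoEdge (w, v, t) hw h'.symm ⟨hwS, hv⟩
    -- hence e is in the temporal core of [t1+1, t2]
    have het : e.2.2 ≠ t1 := fun hfeq => hno e hfeq he.1
    have h1lt : t1 + 1 ≤ e.2.2 := lt_of_le_of_ne he.1.2.1 (Ne.symm het)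
    have : e ∈ G.tCore k (t1 + 1) t2 :=
      ⟨he.1.1, h1lt, he.1.2.2.1,
        mem_kCore_of_kDense hdense he.1.2.2.2.1,
        mem_kCore_of_kDense hdense he.1.2.2.2.2⟩
    exact he.2 (t1 + 1) t2 (by omega) le_rfl (by simp) this
  obtain ⟨f, hft, hfC⟩ := step1
  refine ⟨f, hft, hfC, ?_⟩
  rintro ts' te' hts' hte' hne hmem
  have hts1 : ts' = t1 := le_antisymm (hft ▸ hmem.2.1) hts'
  subst hts1
  have hte2 : te' < t2 := lt_of_le_of_ne hte' (fun h => hne (by rw [h]))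
  -- find the least u with f ∈ tCore k ts' u
  obtain ⟨u, hu, hleast⟩ := Int.exists_least_of_bdd
    (P := fun u => f ∈ G.tCore k ts' u)
    ⟨ts', fun z hz => hz.2.1.trans (hft ▸ hz.2.2.1)⟩ ⟨te', hmem⟩
  have hmcw : MinCoreWindow G k f ts' u := by
    refine ⟨hu, ?_⟩
    rintro a b ha hb hab habmem
    have ha1 : a = ts' := le_antisymm (hft ▸ habmem.2.1) ha
    subst ha1
    have : u ≤ b := hleast b habmem
    exact hab (Prod.ext rfl (le_antisymm hb this))
  exact hmin f u hmcw (lt_of_le_of_lt (hleast te' hmem) hte2)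
end
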